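/- LP relaxation of the generalized densest subgraph problem: For every nonempty A ⊆ V' satisfying k_j ≤ vol_{M_j}(A) ≤ l_j for all j = 1,…,p and dist(u,v) ≤ d_0 for all u,v ∈ A, define t = 1/(vol_g(A) + ν_S), f : V' → ℝ by f(i) = t if i ∈ A and f(i) = 0 otherwise, and α : V' × V' → ℝ by α(i,j) = t if i ∈ A and j ∈ A, and α(i,j) = 0 otherwise. Then (t, f, α) satisfies all the LP constraints: t·k_j ≤ ∑_i M_j(i)·f(i) ≤ t·l_j for all j; f(u) + f(v) ≤ t whenever dist(u,v) > d_0; t ≥ 0; 0 ≤ α(i,j) ≤ min{f(i), f(j)} for all i,j; 0 ≤ f(i) ≤ t for all i; and ∑_i g(i)·f(i) + t·ν_S = 1. Moreover the LP objective ∑_{i,j∈V'} w(i,j)·α(i,j) + 2·∑_{i∈V'} d^S(i)·f(i) + t·μ_S equals (∑_{i∈A, j∈A} w(i,j) + 2·vol_{d^S}(A) + μ_S)/(vol_g(A) + ν_S). Consequently, the optimal value of the LP is an upper bound on the maximum of (∑_{i∈A, j∈A} w(i,j) + 2·vol_{d^S}(A) + μ_S)/(vol_g(A) + ν_S) over all such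 A. -/
import Mathlib


open Finset

/-- `Vp S` is the set of experts `V' = V \ S`, as a subtype. -/
abbrev Vp {V : Type*} [Fintype V] [DecidableEq V] (S : Finset V) := {x : V // x ∉ S}


lemma sum_mul_indicator {ι : Type*} [Fintype ι] [DecidableEq ι]
    (A : Finset ι) (c : ι → ℝ) (t : ℝ) :
    ∑ i, c i * (if i ∈ A then t else 0) = (∑ i ∈ A, c i) * t := by
  simp [mul_ite, Finset.sum_ite_mem, Finset.sum_mul]

lemma sum2_mul_indicator {ι : Type*} [Fintype ι] [DecidableEq ι]
    (A : Finset ι) (w : ι → ι → ℝ) (t : ℝ) :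
    ∑ i, ∑ j, w i j * (if i ∈ A ∧ j ∈ A then t else 0)
      = (∑ i ∈ A, ∑ j ∈ A, w i j) * t := by
  have h : ∀ i, (∑ j, w i j * (if i ∈ A ∧ j ∈ A then t else 0))
      = (if i ∈ A then (∑ j ∈ A, w i j) * t else 0) := by
    intro i
    by_cases hi : i ∈ A <;> simp [hi, sum_mul_indicator A (w i) t, Finset.sum_mul]
  simp only [h, Finset.sum_ite_mem, Finset.univ_inter, Finset.sum_mul]

/-- **LP relaxation of the generalized densest subgraph problem.** For every nonempty feasible
`A ⊆ V'`, the point `t = 1/(vol_g(A) + ν_S)`, `f = t·1_A`, `α = t·1_{A×A}` satisfies all the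
LP constraints, its LP objective equals the generalized density of `A`, and consequently the
LP optimal value is an upper bound on the maximum generalized density. -/
theorem lp_relaxation_of_gdsp
    {V : Type*} [Fintype V] [DecidableEq V] (hV : Nonempty V)
    (w : V → V → ℝ) (hw_symm : ∀ i j, w i j = w j i) (hw_nonneg : ∀ i j, 0 ≤ w i j)
    (g : V → ℝ) (hg : ∀ i, 0 < g i)
    (S : Finset V) (hVp : Nonempty (Vp S))
    (p : ℕ) (hp : 1 ≤ p)
    (M : Fin p → Vp S → ℝ) (hM : ∀ j i, 0 ≤ M j i) (k l : Fin p → ℝ)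
    (dist : Vp S → Vp S → ℝ) (hdist_symm : ∀ u v, dist u v = dist v u)
    (hdist_nonneg : ∀ u v, 0 ≤ dist u v) (d0 : ℝ) (hd0 : 0 ≤ d0)
    -- the restricted degrees d^S and the constants μ_S, ν_S
    (degS : Vp S → ℝ) (hdegS : degS = fun i => ∑ j ∈ S, w i.1 j)
    (muS nuS : ℝ) (hmuS : muS = ∑ i ∈ S, ∑ j ∈ S, w i j) (hnuS : nuS = ∑ i ∈ S, g i)
    -- the set of objective values attained by LP-feasible points (t, f, α)
    (LPvals : Set ℝ)
    (hLPvals : LPvals = {x : ℝ | ∃ (t : ℝ) (f : Vp S → ℝ) (α : Vp S → Vp S → ℝ),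
        (∀ j, t * k j ≤ (∑ i, M j i * f i) ∧ (∑ i, M j i * f i) ≤ t * l j)
        ∧ (∀ u v : Vp S, d0 < dist u v → f u + f v ≤ t)
        ∧ 0 ≤ t
        ∧ (∀ i j : Vp S, 0 ≤ α i j ∧ α i j ≤ f i ∧ α i j ≤ f j)
        ∧ (∀ i : Vp S, 0 ≤ f i ∧ f i ≤ t)
        ∧ (∑ i, g i.1 * f i) + t * nuS = 1
        ∧ x = (∑ i, ∑ j, w i.1 j.1 * α i j) + 2 * (∑ i, degS i * f i) + t * muS})
    -- a nonempty set A ⊆ V' satisfying the skill and distance constraints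
    (A : Finset (Vp S)) (hA : A.Nonempty)
    (hAk : ∀ j, k j ≤ ∑ i ∈ A, M j i) (hAl : ∀ j, (∑ i ∈ A, M j i) ≤ l j)
    (hAdist : ∀ u ∈ A, ∀ v ∈ A, dist u v ≤ d0)
    -- the associated LP point
    (t : ℝ) (ht : t = ((∑ i ∈ A, g i.1) + nuS)⁻¹)
    (f : Vp S → ℝ) (hf : f = fun i => if i ∈ A then t else 0)
    (α : Vp S → Vp S → ℝ) (hα : α = fun i j => if i ∈ A ∧ j ∈ A then t else 0) :
    -- (t, f, α) satisfies all LP constraints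
    (∀ j, t * k j ≤ (∑ i, M j i * f i) ∧ (∑ i, M j i * f i) ≤ t * l j)
    ∧ (∀ u v : Vp S, d0 < dist u v → f u + f v ≤ t)
    ∧ 0 ≤ t
    ∧ (∀ i j : Vp S, 0 ≤ α i j ∧ α i j ≤ f i ∧ α i j ≤ f j)
    ∧ (∀ i : Vp S, 0 ≤ f i ∧ f i ≤ t)
    ∧ (∑ i, g i.1 * f i) + t * nuS = 1
    -- the LP objective at (t, f, α) equals the generalized density of A
    ∧ (∑ i, ∑ j, w i.1 j.1 * α i j) + 2 * (∑ i, degS i * f i) + t * muS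
        = ((∑ i ∈ A, ∑ j ∈ A, w i.1 j.1) + 2 * (∑ i ∈ A, degS i) + muS)
            / ((∑ i ∈ A, g i.1) + nuS)
    -- consequently the LP optimal value is an upper bound on the generalized density
    ∧ ((∑ i ∈ A, ∑ j ∈ A, w i.1 j.1) + 2 * (∑ i ∈ A, degS i) + muS)
        / ((∑ i ∈ A, g i.1) + nuS) ≤ sSup LPvals := by
  
  have hnuS_nonneg : 0 ≤ nuS := by
    rw [hnuS]; exact Finset.sum_nonneg fun i _ => (hg i).le
  have hD : 0 < (∑ i ∈ A, g i.1) + nuS := by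
    have h1 : 0 < ∑ i ∈ A, g i.1 := Finset.sum_pos (fun i _ => hg i.1) hA
    linarith
  have ht_pos : 0 < t := by rw [ht]; exact inv_pos.2 hD
  have hdegS_nonneg : ∀ i, 0 ≤ degS i := by
    intro i; rw [hdegS]; exact Finset.sum_nonneg fun j _ => hw_nonneg _ _
  have hmuS_nonneg : 0 ≤ muS := by
    rw [hmuS]
    exact Finset.sum_nonneg fun i _ => Finset.sum_nonneg fun j _ => hw_nonneg _ _
  have hfsum : ∀ c : Vp S → ℝ, ∑ i : Vp S, c i * f i = (∑ i ∈ A, c i) * t := by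
    intro c; rw [hf]; exact sum_mul_indicator A c t
  have hαsum : ∑ i : Vp S, ∑ j : Vp S, w i.1 j.1 * α i j = (∑ i ∈ A, ∑ j ∈ A, w i.1 j.1) * t := by
    rw [hα]; exact sum2_mul_indicator A (fun i j => w i.1 j.1) t
  have hC1 : ∀ j, t * k j ≤ (∑ i : Vp S, M j i * f i) ∧ (∑ i : Vp S, M j i * f i) ≤ t * l j := by
    intro j
    constructor <;> rw [hfsum (M j)]
    · calc t * k j ≤ t * (∑ i ∈ A, M j i) :=
            mul_le_mul_of_nonneg_left (hAk j) ht_pos.le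
        _ = _ := mul_comm _ _
    · calc (∑ i ∈ A, M j i) * t = t * (∑ i ∈ A, M j i) := mul_comm _ _
        _ ≤ t * l j := mul_le_mul_of_nonneg_left (hAl j) ht_pos.le
  have hC2 : ∀ u v : Vp S, d0 < dist u v → f u + f v ≤ t := by
    intro u v huv
    have hnb : ¬(u ∈ A ∧ v ∈ A) := by
      rintro ⟨hu, hv⟩
      exact absurd (hAdist u hu v hv) (not_le.2 huv)
    rw [hf]
    by_cases hu : u ∈ A <;> by_cases hv : v ∈ A <;>
      simp [hu, hv, ht_pos.le] <;> exact absurd ⟨hu, hv⟩ hnb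
  have hC4 : ∀ i j : Vp S, 0 ≤ α i j ∧ α i j ≤ f i ∧ α i j ≤ f j := by
    intro i j
    rw [hα, hf]
    by_cases hi : i ∈ A <;> by_cases hj : j ∈ A <;>
      simp [hi, hj, ht_pos.le, le_refl]
  have hC5 : ∀ i : Vp S, 0 ≤ f i ∧ f i ≤ t := by
    intro i; rw [hf]; by_cases hi : i ∈ A <;> simp [hi, ht_pos.le]
  have hC6 : (∑ i : Vp S, g i.1 * f i) + t * nuS = 1 := by
    rw [hfsum (fun i => g i.1), ht]
    field_simp
  have hobj : (∑ i : Vp S, ∑ j : Vp S, w i.1 j.1 * α i j) + 2 * (∑ i : Vp S, degS i * f i) + t * muS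
      = ((∑ i ∈ A, ∑ j ∈ A, w i.1 j.1) + 2 * (∑ i ∈ A, degS i) + muS)
          / ((∑ i ∈ A, g i.1) + nuS) := by
    rw [hαsum, hfsum degS, ht, div_eq_mul_inv]
    ring
  have hmem : ((∑ i ∈ A, ∑ j ∈ A, w i.1 j.1) + 2 * (∑ i ∈ A, degS i) + muS)
      / ((∑ i ∈ A, g i.1) + nuS) ∈ LPvals := by
    rw [hLPvals]
    exact ⟨t, f, α, hC1, hC2, ht_pos.le, hC4, hC5, hC6, hobj.symm⟩
  have hbdd : BddAbove LPvals := by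
    refine ⟨(∑ i : Vp S, ∑ j : Vp S, w i.1 j.1 * (g i.1)⁻¹)
        + 2 * (∑ i : Vp S, degS i * (g i.1)⁻¹) + muS * nuS⁻¹, ?_⟩
    rw [hLPvals]
    rintro x ⟨t', f', α', -, -, ht', hα', hf', hsum', rfl⟩
    have hf'le : ∀ i, f' i ≤ (g i.1)⁻¹ := by
      intro i
      have h1 : g i.1 * f' i ≤ ∑ j, g j.1 * f' j :=
        Finset.single_le_sum (f := fun j : Vp S => g j.1 * f' j)
          (fun j _ => mul_nonneg (hg j.1).le (hf' j).1) (Finset.mem_univ i)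
      have h2 : g i.1 * f' i ≤ 1 := by nlinarith [mul_nonneg ht' hnuS_nonneg]
      have h3 := hg i.1
      calc f' i = (g i.1)⁻¹ * (g i.1 * f' i) := by field_simp
        _ ≤ (g i.1)⁻¹ * 1 := mul_le_mul_of_nonneg_left h2 (inv_nonneg.2 h3.le)
        _ = _ := mul_one _
    have hterm1 : (∑ i : Vp S, ∑ j : Vp S, w i.1 j.1 * α' i j)
        ≤ ∑ i : Vp S, ∑ j : Vp S, w i.1 j.1 * (g i.1)⁻¹ :=
      Finset.sum_le_sum fun i _ => Finset.sum_le_sum fun j _ =>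
        mul_le_mul_of_nonneg_left (le_trans (hα' i j).2.1 (hf'le i)) (hw_nonneg _ _)
    have hterm2 : (∑ i : Vp S, degS i * f' i) ≤ ∑ i : Vp S, degS i * (g i.1)⁻¹ :=
      Finset.sum_le_sum fun i _ =>
        mul_le_mul_of_nonneg_left (hf'le i) (hdegS_nonneg i)
    have hterm3 : t' * muS ≤ muS * nuS⁻¹ := by
      rcases S.eq_empty_or_nonempty with hS | hS
      · simp [hmuS, hS]
      · have hnu_pos : 0 < nuS := by
          rw [hnuS]; exact Finset.sum_pos (fun i _ => hg i) hS
        have htnu : t' * nuS ≤ 1 := by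
          have h0 : 0 ≤ ∑ i : Vp S, g i.1 * f' i :=
            Finset.sum_nonneg fun i _ => mul_nonneg (hg i.1).le (hf' i).1
          linarith
        have ht'le : t' ≤ nuS⁻¹ := by
          calc t' = (t' * nuS) * nuS⁻¹ := by field_simp
            _ ≤ 1 * nuS⁻¹ :=
                mul_le_mul_of_nonneg_right htnu (inv_nonneg.2 hnu_pos.le)
            _ = nuS⁻¹ := one_mul _
        calc t' * muS ≤ nuS⁻¹ * muS :=
              mul_le_mul_of_nonneg_right ht'le hmuS_nonneg
          _ = muS * nuS⁻¹ := mul_comm _ _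
    linarith
  exact ⟨hC1, hC2, ht_pos.le, hC4, hC5, hC6, hobj, le_csSup hbdd hmem⟩
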